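/- For every Θ = (θ₁,…,θ₅) with all θ_i > 0 and θ₁+⋯+θ₅ < π and all diagonal matrices D₁ = diag(d₁,…,d₅), D₂ = diag(e₁,…,e₅) with strictly positive diagonal entries, the matrix X = D₁ S(Θ) D₂ satisfies the binomial equation X₁₁X₂₂X₃₃X₄₄X₅₅ = X₃₁X₄₂X₅₃X₁₄X₂₅, where X_{ij} denotes the entry of X in row i and column j. -/

import Mathlib

open Matrix Real

/-- The matrix `S(Θ)` whose columns span the nonnegative zeros of the Hildebrand matrix. -/
noncomputable def Smat (θ : Fin 5 → ℝ) : Matrix (Fin 5) (Fin 5) ℝ :=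
  !![sin (θ 4), 0, 0, sin (θ 1), sin (θ 2 + θ 3);
     sin (θ 3 + θ 4), sin (θ 0), 0, 0, sin (θ 2);
     sin (θ 3), sin (θ 4 + θ 0), sin (θ 1), 0, 0;
     0, sin (θ 4), sin (θ 0 + θ 1), sin (θ 2), 0;
     0, 0, sin (θ 0), sin (θ 1 + θ 2), sin (θ 3)]

/-- every matrix `X = D₁ S(Θ) D₂` with positive diagonal matrices `D₁, D₂`
satisfies the binomial equation `X₁₁X₂₂X₃₃X₄₄X₅₅ = X₃₁X₄₂X₅₃X₁₄X₂₅`. -/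
theorem smat_binomial (θ : Fin 5 → ℝ) (hθ : ∀ i, 0 < θ i) (hsum : (∑ i, θ i) < π)
    (d e : Fin 5 → ℝ) (hd : ∀ i, 0 < d i) (he : ∀ i, 0 < e i) :
    (diagonal d * Smat θ * diagonal e) 0 0 * (diagonal d * Smat θ * diagonal e) 1 1 *
      (diagonal d * Smat θ * diagonal e) 2 2 * (diagonal d * Smat θ * diagonal e) 3 3 *
      (diagonal d * Smat θ * diagonal e) 4 4 =
    (diagonal d * Smat θ * diagonal e) 2 0 * (diagonal d * Smat θ * diagonal e) 3 1 *
      (diagonal d * Smat θ * diagonal e) 4 2 * (diagonal d * Smat θ * diagonal e) 0 3 *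
      (diagonal d * Smat θ * diagonal e) 1 4 := by
  simp only [Matrix.mul_assoc, Matrix.diagonal_mul, Matrix.mul_diagonal, Smat]
  norm_num [Matrix.cons_val_zero, Matrix.cons_val_one, Matrix.head_cons,
    Matrix.cons_val_fin_one, Matrix.head_fin_const, Fin.isValue,
    Matrix.cons_val', Matrix.cons_val_succ, Matrix.empty_val']
  simp [Matrix.vecHead, Matrix.vecTail]
  ring
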